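/- Soundness of the iteration: if J ∈ 𝔄ₙ (the n-th set of systems produced by the decision algorithm starting from I) and J is solvable at depth k by a closed substitution, then I is solvable at depth k + n. -/
import Mathlib


/-- Types over a type alphabet whose constructors are at most unary:
type parameters, nullary constructors and unary constructors. -/
inductive UTy (C : Type) where
  | param : ℕ → UTy C
  | con0 : C → UTy C
  | con1 : C → UTy C → UTy C
deriving DecidableEq

/-- The subtype relation on types (arguments are compared only up to the
minimum of the arities). -/
inductive USub {C : Type} [LE C] : UTy C → UTy C → Prop where
  | param (n : ℕ) : USub (.param n) (.param n)
  | con00 {K L : C} : K ≤ L → USub (.con0 K) (.con0 L)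
  | con01 {K L : C} {τ : UTy C} : K ≤ L → USub (.con0 K) (.con1 L τ)
  | con10 {K L : C} {σ : UTy C} : K ≤ L → USub (.con1 K σ) (.con0 L)
  | con11 {K L : C} {σ τ : UTy C} : K ≤ L → USub σ τ →
      USub (.con1 K σ) (.con1 L τ)

/-- Applying a parameter substitution to a type. -/
def UTy.subst {C : Type} (Φ : ℕ → UTy C) : UTy C → UTy C
  | .param n => Φ n
  | .con0 K => .con0 K
  | .con1 K σ => .con1 K (σ.subst Φ)

/-- The list of type parameters of a type. -/
def UTy.params {C : Type} : UTy C → List ℕ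
  | .param n => [n]
  | .con0 _ => []
  | .con1 _ σ => σ.params

/-- The depth of a type. -/
def UTy.depth {C : Type} : UTy C → ℕ
  | .param _ => 0
  | .con0 _ => 1
  | .con1 _ σ => 1 + σ.depth

/-- The domain of a parameter substitution. -/
def substDom {C : Type} (Φ : ℕ → UTy C) : Set ℕ := {n | Φ n ≠ .param n}

/-- `AllParSubst A` is the set of parameter substitutions `Φ` with
`dom(Φ) ⊆ A`, `depth(Φ) ≤ 1`, and `Par(αΦ) ⊆ {α}` but `αΦ ≠ α`
for all `α ∈ A`. -/
def AllParSubst {C : Type} (A : Set ℕ) : Set (ℕ → UTy C) :=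
  {Φ | substDom Φ ⊆ A ∧ (∀ m ∈ substDom Φ, (Φ m).depth ≤ 1) ∧
    ∀ a ∈ A, (∀ n ∈ (Φ a).params, n = a) ∧ Φ a ≠ .param a}

/-- A type inequation `σ ⪯ τ`. -/
abbrev UIneq (C : Type) := UTy C × UTy C

/-- A system of type inequations is solvable. -/
def USolvable {C : Type} [LE C] (I : Set (UIneq C)) : Prop :=
  ∃ Φ : ℕ → UTy C, ∀ p ∈ I, USub (p.1.subst Φ) (p.2.subst Φ)

/-- The set of type parameters of a system of type inequations. -/
def sysParams {C : Type} (I : Set (UIneq C)) : Set ℕ :=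
  {n | ∃ p ∈ I, n ∈ p.1.params ∨ n ∈ p.2.params}

/-- Applying a parameter substitution to a system of type inequations. -/
def applySys {C : Type} (Φ : ℕ → UTy C) (I : Set (UIneq C)) : Set (UIneq C) :=
  (fun p : UIneq C => (p.1.subst Φ, p.2.subst Φ)) '' I

/-- The possible results of normalizing a type inequation: `true`, `false`,
or an inequation. -/
inductive NFr (C : Type) where
  | isTrue : NFr C
  | isFalse : NFr C
  | ineq : UTy C → UTy C → NFr C

open Classical in
/-- The normal form `nf(σ ⪯ τ)` of a type inequation. -/
noncomputable def nf {C : Type} [LE C] : UTy C → UTy C → NFr C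
  | .param a, τ => .ineq (.param a) τ
  | σ, .param a => .ineq σ (.param a)
  | .con0 K, .con0 L => if K ≤ L then .isTrue else .isFalse
  | .con0 K, .con1 L _ => if K ≤ L then .isTrue else .isFalse
  | .con1 K _, .con0 L => if K ≤ L then .isTrue else .isFalse
  | .con1 K σ, .con1 L τ => if K ≤ L then nf σ τ else .isFalse

open Classical in
/-- Normalizing a system of type inequations: each inequation is replaced by
its normal form, inequations equivalent to `true` are discarded, and if some
inequation is equivalent to `false` the whole system collapses to the
unsolvable system (represented by `none`). -/
noncomputable def nfSys {C : Type} [LE C] (I : Set (UIneq C)) :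
    Option (Set (UIneq C)) :=
  if ∃ p ∈ I, nf p.1 p.2 = NFr.isFalse then none
  else some {q | ∃ p ∈ I, nf p.1 p.2 = NFr.ineq q.1 q.2}

/-- `Inst I` is the set of (normalized, non-failed) instantiations of the
system `I` along substitutions from `AllParSubst(Par I)`. -/
noncomputable def Inst {C : Type} [LE C] (I : Set (UIneq C)) :
    Set (Set (UIneq C)) :=
  {J | ∃ Φ ∈ AllParSubst (C := C) (sysParams I),
    nfSys (applySys Φ I) = some J}

/-- One iteration of the decision algorithm: from the pair (current systems
`𝔄`, memo `𝔐`) produce the next pair, applying `Inst` to every system and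
discarding systems already seen. -/
noncomputable def algIter {C : Type} [LE C] (I : Set (UIneq C)) :
    ℕ → Set (Set (UIneq C)) × Set (Set (UIneq C))
  | 0 => ({I}, {I})
  | n + 1 =>
      let p := algIter I n
      let A := {K | ∃ J ∈ p.1, K ∈ Inst J} \ p.2
      (A, p.2 ∪ A)

/-- `frakA I n` is the set `𝔄ₙ` of systems produced by the `n`-th iteration
of the decision algorithm started on `I`. -/
noncomputable def frakA {C : Type} [LE C] (I : Set (UIneq C)) (n : ℕ) :
    Set (Set (UIneq C)) :=
  (algIter I n).1

/-- `◇ₖ I`: the system `I` is solvable at depth `k` by a closed parameter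
substitution. -/
def SolvAt {C : Type} [LE C] (k : ℕ) (I : Set (UIneq C)) : Prop :=
  ∃ Φ : ℕ → UTy C,
    (∀ m, Φ m ≠ .param m → (Φ m).params = [] ∧ (Φ m).depth ≤ k) ∧
    ∀ p ∈ I, USub (p.1.subst Φ) (p.2.subst Φ)

namespace FrakAux

variable {C : Type}

theorem subst_subst (σ : UTy C) (Φ Δ : ℕ → UTy C) :
    (σ.subst Φ).subst Δ = σ.subst (fun m => (Φ m).subst Δ) := by
  induction σ with
  | param n => rfl
  | con0 K => rfl
  | con1 K σ ih => simp [UTy.subst, ih]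

theorem nf_true [LE C] (σ : UTy C) : ∀ τ : UTy C, nf σ τ = NFr.isTrue →
    ∀ Δ, USub (σ.subst Δ) (τ.subst Δ) := by
  induction σ with
  | param a => intro τ h; simp [nf] at h
  | con0 K =>
    intro τ h Δ
    cases τ with
    | param a => simp [nf] at h
    | con0 L =>
      simp only [nf] at h
      split at h
      · exact USub.con00 ‹_›
      · cases h
    | con1 L τ' =>
      simp only [nf] at h
      split at h
      · exact USub.con01 ‹_›
      · cases h
  | con1 K σ' ih =>
    intro τ h Δ
    cases τ with
    | param a => simp [nf] at h
    | con0 L =>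
      simp only [nf] at h
      split at h
      · exact USub.con10 ‹_›
      · cases h
    | con1 L τ' =>
      simp only [nf] at h
      split at h
      · exact USub.con11 ‹_› (ih τ' h Δ)
      · cases h

theorem nf_ineq [LE C] (σ : UTy C) : ∀ τ a b : UTy C,
    nf σ τ = NFr.ineq a b →
    ∀ Δ, USub (a.subst Δ) (b.subst Δ) → USub (σ.subst Δ) (τ.subst Δ) := by
  induction σ with
  | param n =>
    intro τ a b h Δ hab
    simp only [nf, NFr.ineq.injEq] at h
    obtain ⟨rfl, rfl⟩ := h
    exact hab
  | con0 K =>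
    intro τ a b h Δ hab
    cases τ with
    | param n =>
      simp only [nf, NFr.ineq.injEq] at h
      obtain ⟨rfl, rfl⟩ := h
      exact hab
    | con0 L => simp only [nf] at h; split at h <;> cases h
    | con1 L τ' => simp only [nf] at h; split at h <;> cases h
  | con1 K σ' ih =>
    intro τ a b h Δ hab
    cases τ with
    | param n =>
      simp only [nf, NFr.ineq.injEq] at h
      obtain ⟨rfl, rfl⟩ := h
      exact hab
    | con0 L => simp only [nf] at h; split at h <;> cases h
    | con1 L τ' =>
      simp only [nf] at h
      split at h
      · exact USub.con11 ‹_› (ih τ' a b h Δ hab)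
      · cases h

/-- Pruning relation: `PruneR σ' σ` iff `σ'` is obtained from `σ` by
replacing some subtrees `con1 K ρ` by `con0 K`. -/
inductive PruneR : UTy C → UTy C → Prop
  | param (n : ℕ) : PruneR (.param n) (.param n)
  | con0 (K : C) : PruneR (.con0 K) (.con0 K)
  | con1 (K : C) {σ' σ : UTy C} : PruneR σ' σ → PruneR (.con1 K σ') (.con1 K σ)
  | chop (K : C) (σ : UTy C) : PruneR (.con0 K) (.con1 K σ)

theorem prune_usub [LE C] {x y x' y' : UTy C} (hxy : USub x y)
    (hx : PruneR x' x) (hy : PruneR y' y) : USub x' y' := by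
  induction hxy generalizing x' y' with
  | param n => cases hx; cases hy; exact USub.param n
  | con00 h => cases hx; cases hy; exact USub.con00 h
  | con01 h =>
    cases hx
    cases hy with
    | con1 _ h' => exact USub.con01 h
    | chop => exact USub.con00 h
  | con10 h =>
    cases hy
    cases hx with
    | con1 _ h' => exact USub.con10 h
    | chop => exact USub.con00 h
  | con11 h hst ih =>
    cases hx with
    | con1 _ hx' =>
      cases hy with
      | con1 _ hy' => exact USub.con11 h (ih hx' hy')
      | chop => exact USub.con10 h
    | chop =>
      cases hy with
      | con1 _ hy' => exact USub.con01 h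
      | chop => exact USub.con00 h

theorem prune_subst {Θ' Θ : ℕ → UTy C} (h : ∀ m, PruneR (Θ' m) (Θ m)) :
    ∀ σ : UTy C, PruneR (σ.subst Θ') (σ.subst Θ) := by
  intro σ
  induction σ with
  | param n => exact h n
  | con0 K => exact PruneR.con0 K
  | con1 K σ ih => exact PruneR.con1 K ih

open Classical in
/-- Prune a type by chopping every `con1` node whose argument is open. -/
noncomputable def F : UTy C → UTy C
  | .param n => .param n
  | .con0 K => .con0 K
  | .con1 K σ => if σ.params = [] then .con1 K (F σ) else .con0 K

theorem prune_F : ∀ σ : UTy C, PruneR (F σ) σ := by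
  intro σ
  induction σ with
  | param n => exact PruneR.param n
  | con0 K => exact PruneR.con0 K
  | con1 K σ ih =>
    rw [F]
    split
    · exact PruneR.con1 K ih
    · exact PruneR.chop K σ

theorem F_closed : ∀ σ : UTy C, σ.params = [] → F σ = σ := by
  intro σ
  induction σ with
  | param n => intro h; cases h
  | con0 K => intro _; rfl
  | con1 K σ ih =>
    intro h
    have h' : σ.params = [] := h
    rw [F, if_pos h', ih h']

theorem F_params : ∀ σ : UTy C, σ ≠ .param 0 → True := fun _ _ => trivial

/-- The key step lemma: soundness of one `Inst` step. -/
theorem inst_step [PartialOrder C] {I J : Set (UIneq C)} {k : ℕ}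
    (hJ : J ∈ Inst I) (hsol : SolvAt k J) : SolvAt (k + 1) I := by
  obtain ⟨Φ, hΦ, hnf⟩ := hJ
  obtain ⟨hdom, hdep, hpar⟩ := hΦ
  obtain ⟨Ψ, hΨc, hΨs⟩ := hsol
  set Θ : ℕ → UTy C := fun m => (Φ m).subst Ψ with hΘ
  -- extract the description of J from nfSys
  rw [nfSys] at hnf
  split at hnf
  · cases hnf
  · rename_i hnofalse
    have hJdef : J = {q : UIneq C | ∃ p ∈ applySys Φ I,
        nf p.1 p.2 = NFr.ineq q.1 q.2} := by
      cases hnf; rfl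
    refine ⟨fun m => F (Θ m), ?_, ?_⟩
    · -- closedness and depth
      intro m hm
      change F (Θ m) ≠ _ at hm
      show (F (Θ m)).params = [] ∧ (F (Θ m)).depth ≤ k + 1
      by_cases hΦm : Φ m = .param m
      · -- Θ m = Ψ m
        have hΘm : Θ m = Ψ m := by simp [hΘ, hΦm, UTy.subst]
        by_cases hΨm : Ψ m = .param m
        · exfalso; apply hm; rw [hΘm, hΨm]; rfl
        · obtain ⟨hp, hd⟩ := hΨc m hΨm
          rw [hΘm, F_closed _ hp]
          exact ⟨hp, le_trans hd (Nat.le_succ k)⟩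
      · -- m is in the domain of Φ
        have hmem : m ∈ substDom Φ := hΦm
        have hmP : m ∈ sysParams I := hdom hmem
        have hd1 : (Φ m).depth ≤ 1 := hdep m hmem
        obtain ⟨hpm, _⟩ := hpar m hmP
        -- classify Φ m
        cases hΦm' : Φ m with
        | param n =>
          exfalso
          have : n = m := hpm n (by rw [hΦm']; simp [UTy.params])
          exact hΦm (by rw [hΦm', this])
        | con0 K =>
          have hΘm : Θ m = .con0 K := by simp [hΘ, hΦm', UTy.subst]
          rw [hΘm]
          exact ⟨rfl, by simp [F, UTy.depth, UTy.params]⟩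
        | con1 K ρ =>
          -- depth forces ρ to be a parameter, and hpm forces it to be m
          have hρd : ρ.depth = 0 := by
            rw [hΦm'] at hd1
            simp [UTy.depth] at hd1
            omega
          obtain ⟨n, rfl⟩ : ∃ n, ρ = UTy.param n := by
            cases ρ with
            | param n => exact ⟨n, rfl⟩
            | con0 _ => simp [UTy.depth] at hρd
            | con1 _ _ => simp [UTy.depth] at hρd
          have hn : n = m := hpm n (by rw [hΦm']; simp [UTy.params])
          rw [hn] at hΦm'
          have hΘm : Θ m = .con1 K (Ψ m) := by simp [hΘ, hΦm', UTy.subst]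
          rw [hΘm, F]
          by_cases hcl : (Ψ m).params = []
          · rw [if_pos hcl, F_closed _ hcl]
            constructor
            · simpa [UTy.params] using hcl
            · have hΨn : Ψ m ≠ .param m := by
                intro h; rw [h] at hcl; simp [UTy.params] at hcl
              obtain ⟨_, hd⟩ := hΨc m hΨn
              simp [UTy.depth]; omega
          · rw [if_neg hcl]
            exact ⟨rfl, by simp [UTy.depth]⟩
    · -- the pruned composition solves I
      intro p hp
      have hUΘ : USub (p.1.subst Θ) (p.2.subst Θ) := by
        have hmem : (p.1.subst Φ, p.2.subst Φ) ∈ applySys Φ I :=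
          ⟨p, hp, rfl⟩
        rw [hΘ, ← subst_subst, ← subst_subst]
        cases hnfp : nf (p.1.subst Φ) (p.2.subst Φ) with
        | isTrue => exact nf_true _ _ hnfp Ψ
        | isFalse =>
          exact absurd ⟨(p.1.subst Φ, p.2.subst Φ), hmem, hnfp⟩ hnofalse
        | ineq a b =>
          have hab : (a, b) ∈ J := by
            rw [hJdef]
            exact ⟨(p.1.subst Φ, p.2.subst Φ), hmem, hnfp⟩
          exact nf_ineq _ _ a b hnfp Ψ (hΨs (a, b) hab)
      exact prune_usub hUΘ (prune_subst (fun m => prune_F (Θ m)) p.1)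
        (prune_subst (fun m => prune_F (Θ m)) p.2)

end FrakAux

/-- Soundness of the iteration: if `J ∈ 𝔄ₙ` and `J` is
solvable at depth `k` by a closed substitution, then `I` is solvable at depth
`k + n`. -/
theorem frakA_sound {C : Type} [PartialOrder C] (I J : Set (UIneq C))
    (n k : ℕ) (hJ : J ∈ frakA I n) (hsol : SolvAt k J) :
    SolvAt (k + n) I := by
  induction n generalizing J k with
  | zero =>
    have hJI : J = I := by simpa [frakA, algIter] using hJ
    simpa [hJI] using hsol
  | succ n ih =>
    obtain ⟨⟨J', hJ', hInst⟩, -⟩ :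
        (∃ J' ∈ frakA I n, J ∈ Inst J') ∧ J ∉ (algIter I n).2 := by
      simpa [frakA, algIter] using hJ
    have h1 : SolvAt (k + 1) J' := FrakAux.inst_step hInst hsol
    have h2 := ih J' (k + 1) hJ' h1
    have e : k + (n + 1) = k + 1 + n := by omega
    rw [e]
    exact h2
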